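/- Let D = {(x, y) ∈ [0,1]² : xy < 1} and define f : D → ℝ² by f(x, y) = ( y(1−x)/(1−xy), x(1−y) ). Then the image f(D) equals the set { (u, v) ∈ ℝ² : 0 ≤ v ≤ 1 and 0 ≤ u ≤ ((1−v)/(1+v))² }. -/

import Mathlib

/-- The image of `D = {(x, y) ∈ [0,1]² : xy < 1}` under
`f(x, y) = (y(1−x)/(1−xy), x(1−y))` equals
`{(u, v) : 0 ≤ v ≤ 1 and 0 ≤ u ≤ ((1−v)/(1+v))²}`. -/
theorem image_f_unit_square :
    (fun p : ℝ × ℝ => (p.2 * (1 - p.1) / (1 - p.1 * p.2), p.1 * (1 - p.2))) ''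
        {p : ℝ × ℝ | 0 ≤ p.1 ∧ p.1 ≤ 1 ∧ 0 ≤ p.2 ∧ p.2 ≤ 1 ∧ p.1 * p.2 < 1}
      = {q : ℝ × ℝ | 0 ≤ q.2 ∧ q.2 ≤ 1 ∧ 0 ≤ q.1 ∧ q.1 ≤ ((1 - q.2) / (1 + q.2)) ^ 2} := by
  ext ⟨u, v⟩
  simp only [Set.mem_image, Set.mem_setOf_eq, Prod.ext_iff]
  constructor
  · rintro ⟨⟨x, y⟩, ⟨hx0, hx1, hy0, hy1, hxy⟩, hu, hv⟩
    simp only at hu hv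
    subst hu hv
    have h1 : (0:ℝ) < 1 - x * y := by linarith
    have hv0 : (0:ℝ) ≤ x * (1 - y) := mul_nonneg hx0 (by linarith)
    have hv2 : (0:ℝ) < 1 + x * (1 - y) := by linarith
    refine ⟨hv0, by nlinarith, div_nonneg (mul_nonneg hy0 (by linarith)) h1.le, ?_⟩
    rw [div_pow, div_le_div_iff₀ h1 (by positivity)]
    nlinarith [mul_nonneg (by linarith : (0:ℝ) ≤ 1 - y)
      (sq_nonneg (2*x - 1 - x*(1-y))), sq_nonneg (1 - y)]
  · rintro ⟨hv0, hv1, hu0, hu1⟩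
    rcases eq_or_lt_of_le hv0 with hv | hv
    · -- v = 0 : use (0, u)
      refine ⟨(0, u), ⟨le_refl 0, zero_le_one, hu0, ?_, by simpa using zero_lt_one⟩, ?_, ?_⟩
      · have : ((1 - v) / (1 + v)) ^ 2 = 1 := by rw [← hv]; norm_num
        linarith [hu1.trans_eq this]
      · simp
      · simp [← hv]
    · -- v > 0 : intermediate value theorem
      set m : ℝ := (1 + v) / 2 with hm
      have hvm : v ≤ m := by rw [hm]; linarith
      have hg : ContinuousOn (fun t : ℝ => (t - v) * (1 - t) / (t * (1 + v - t)))
          (Set.Icc v m) := by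
        apply ContinuousOn.div (by fun_prop) (by fun_prop)
        rintro t ⟨ht1, ht2⟩
        have h1 : 0 < t := lt_of_lt_of_le hv ht1
        have h2 : 0 < 1 + v - t := by rw [hm] at ht2; linarith
        exact (mul_pos h1 h2).ne'
      have key := intermediate_value_Icc hvm hg
      have hgv : (fun t : ℝ => (t - v) * (1 - t) / (t * (1 + v - t))) v = 0 := by simp
      have hgm : (fun t : ℝ => (t - v) * (1 - t) / (t * (1 + v - t))) m
          = ((1 - v) / (1 + v)) ^ 2 := by
        simp only [hm]
        rw [div_pow]
        rw [div_eq_div_iff (by nlinarith) (by positivity)]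
        ring
      have hmem : u ∈ Set.Icc ((fun t : ℝ => (t - v) * (1 - t) / (t * (1 + v - t))) v)
          ((fun t : ℝ => (t - v) * (1 - t) / (t * (1 + v - t))) m) := by
        rw [hgv, hgm]; exact ⟨hu0, hu1⟩
      obtain ⟨t, ⟨ht1, ht2⟩, hgt⟩ := key hmem
      simp only at hgt
      have htpos : 0 < t := lt_of_lt_of_le hv ht1
      have htm : t ≤ m := ht2
      have ht1' : t ≤ 1 := by rw [hm] at htm; linarith
      have hnum : 0 < 1 + v - t := by rw [hm] at htm; linarith
      refine ⟨(t, (t - v) / t), ⟨htpos.le, ht1',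
        div_nonneg (by linarith) htpos.le, by
          rw [div_le_one htpos]; linarith, ?_⟩, ?_, ?_⟩
      · -- t * ((t-v)/t) < 1
        have : t * ((t - v) / t) = t - v := by field_simp
        rw [this]; rw [hm] at htm; linarith
      · -- first coordinate
        simp only
        rw [← hgt]
        have h1 : t * ((t - v) / t) = t - v := by field_simp
        rw [h1, div_mul_eq_mul_div, div_div]
        congr 1
        ring
      · -- second coordinate
        simp only
        field_simp
        ring
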